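/- Let q be an even prime power, let F_q be a finite field with q elements, let m ≥ 8 be even, and let ℓ be the least prime not dividing m. Let r be a primitive prime divisor of q^ℓ − 1 and let s be a primitive prime divisor of q^{m−ℓ} − 1. Then the symplectic group Sp_{2m}(q) = Matrix.symplecticGroup (Fin m) F_q contains an element of order r·s. -/

import Mathlib

open Polynomial

universe u

private lemma exists_finext (F : Type u) [Field F] [Fintype F] {d : ℕ} (hd : d ≠ 0) :
    ∃ (K : Type u) (_ : Field K) (_ : Algebra F K) (_ : Fintype K),
      Module.finrank F K = d ∧ Fintype.card K = Fintype.card F ^ d := by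
  classical
  set q := Fintype.card F with hqdef
  have hq1 : 1 < q := Fintype.one_lt_card
  set p := ringChar F with hpdef
  haveI hcF : CharP F p := ringChar.charP F
  haveI hpfact : Fact p.Prime := ⟨CharP.char_is_prime F p⟩
  obtain ⟨n, hpn, hqn⟩ := FiniteField.card F p
  set g : F[X] := X ^ q ^ d - X with hgdef
  have hgne : g ≠ 0 := FiniteField.X_pow_card_pow_sub_X_ne_zero F hd hq1
  let K := g.SplittingField
  haveI : CharP K p := charP_of_injective_algebraMap' (A := K) F p
  haveI : Finite K := Module.finite_of_finite F
  letI : Fintype K := Fintype.ofFinite K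
  have hqd : q ^ d = p ^ (n * d) := by rw [hqdef, hqn, pow_mul]
  have key : ∀ x : K, x ^ q ^ d = x := by
    let S : Subalgebra F K :=
      { ((iterateFrobenius K p (n * d)).eqLocusField (RingHom.id K)).toSubring with
        algebraMap_mem' := fun a => show iterateFrobenius K p (n * d) (algebraMap F K a)
            = RingHom.id K (algebraMap F K a) by
          rw [iterateFrobenius_def, RingHom.id_apply, ← map_pow, ← hqd,
            FiniteField.pow_card_pow] }
    have hroots : g.rootSet K ⊆ (S : Set K) := by
      intro x hx
      rw [mem_rootSet_of_ne hgne] at hx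
      have hxx : x ^ q ^ d = x := by simpa [g, sub_eq_zero] using hx
      show iterateFrobenius K p (n * d) x = RingHom.id K x
      rw [iterateFrobenius_def, RingHom.id_apply, ← hqd, hxx]
    have htop : (⊤ : Subalgebra F K) ≤ S := by
      exact le_trans (le_of_eq (SplittingField.adjoin_rootSet g).symm)
        (Algebra.adjoin_le hroots)
    intro x
    have hx : x ∈ S := htop Algebra.mem_top
    have hx' : iterateFrobenius K p (n * d) x = x := hx
    rwa [iterateFrobenius_def, ← hqd] at hx'
  have huniv : g.rootSet K = Set.univ := by
    apply Set.eq_univ_of_forall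
    intro x
    rw [mem_rootSet_of_ne hgne]
    simp [g, sub_eq_zero, key x]
  have hsep : g.Separable :=
    galois_poly_separable p (q ^ d)
      (by rw [hqd]; exact dvd_pow_self p (by positivity))
  have hcard : Fintype.card K = q ^ d := by
    have h1 : Fintype.card (g.rootSet K) = g.natDegree :=
      card_rootSet_eq_natDegree hsep (SplittingField.splits g)
    have h2 : g.natDegree = q ^ d := FiniteField.X_pow_card_pow_sub_X_natDegree_eq F hd hq1
    have e : ↥(g.rootSet K) ≃ K := (Equiv.setCongr huniv).trans (Equiv.Set.univ K)
    rw [← h2, ← h1]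
    exact (Fintype.card_congr e).symm
  have hrank : Module.finrank F K = d := by
    have hc := Module.card_eq_pow_finrank (K := F) (V := K)
    rw [hcard] at hc
    exact (Nat.pow_right_injective hq1 hc.symm)
  exact ⟨K, inferInstance, inferInstance, inferInstance, hrank, hcard⟩

open Matrix

private lemma fromBlocks_pow {n : Type*} [DecidableEq n] [Fintype n] {R : Type*} [CommRing R]
    (A B : Matrix n n R) (k : ℕ) :
    (Matrix.fromBlocks A 0 0 B) ^ k = Matrix.fromBlocks (A ^ k) 0 0 (B ^ k) := by
  induction k with
  | zero => simp [Matrix.fromBlocks_one]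
  | succ k ih =>
      rw [pow_succ, pow_succ, pow_succ, ih, Matrix.fromBlocks_multiply]
      simp

set_option maxHeartbeats 2000000 in
/-- Adjacency claim from the proof of Proposition 3.2: for `q` an even prime power,
`m ≥ 8` even, `ℓ` the least prime not dividing `m`, `r` a primitive prime divisor of
`q^ℓ - 1` and `s` a primitive prime divisor of `q^(m-ℓ) - 1`, the group `Sp_{2m}(q)`
contains an element of order `r * s`. -/
theorem Sp_has_element_of_order_ppd_mul {q : ℕ} (hq : IsPrimePow q) (hqe : Even q)
    (F : Type*) [Field F] [Fintype F] (hF : Fintype.card F = q)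
    {m : ℕ} (hm : 8 ≤ m) (hme : Even m)
    {ℓ : ℕ} (hℓ : IsLeast {t : ℕ | t.Prime ∧ ¬ t ∣ m} ℓ)
    {r : ℕ} (hr : r.Prime) (hrdvd : r ∣ q ^ ℓ - 1)
    (hrppd : ∀ i : ℕ, 1 ≤ i → i < ℓ → ¬ r ∣ q ^ i - 1)
    {s : ℕ} (hs : s.Prime) (hsdvd : s ∣ q ^ (m - ℓ) - 1)
    (hsppd : ∀ i : ℕ, 1 ≤ i → i < m - ℓ → ¬ s ∣ q ^ i - 1) :
    ∃ x : Matrix.symplecticGroup (Fin m) F, orderOf x = r * s := by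
  classical
  obtain ⟨⟨hℓp, hℓndvd⟩, hleast⟩ := hℓ
  -- ℓ < m
  have h2m : 2 ∣ m := hme.two_dvd
  have hℓlt : ℓ < m := by
    obtain ⟨P, hP, h1, h2⟩ := Nat.exists_prime_lt_and_le_two_mul (m / 2) (by omega)
    have h2P : 2 * (m / 2) = m := Nat.mul_div_cancel' h2m
    have hPm : P ≤ m := by omega
    have hPndvd : ¬ P ∣ m := by
      intro hdvd
      obtain ⟨k, hk⟩ := hdvd
      have hP2 : 2 < P := by omega
      have : k = 1 := by
        rcases Nat.lt_or_ge k 2 with hk2 | hk2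
        · interval_cases k <;> omega
        · nlinarith
      have : m = P := by subst this; omega
      have := (Nat.Prime.even_iff hP).mp (this ▸ hme)
      omega
    have hℓP : ℓ ≤ P := hleast ⟨hP, hPndvd⟩
    have : ℓ ≠ m := by
      rintro rfl
      exact absurd ((Nat.Prime.even_iff hℓp).mp hme) (by omega)
    omega
  have hℓpos : 1 ≤ ℓ := hℓp.one_lt.le
  have hd2 : m - ℓ ≠ 0 := by omega
  -- r ≠ s
  have hne : r ≠ s := by
    rintro rfl
    have hℓne : ℓ ≠ m - ℓ := by
      intro h
      exact hℓndvd ⟨2, by omega⟩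
    rcases lt_or_gt_of_ne hℓne with h | h
    · exact hsppd ℓ hℓp.one_lt.le h hrdvd
    · exact hrppd (m - ℓ) (by omega) h hsdvd
  have hcop : Nat.Coprime r s := (Nat.coprime_primes hr hs).mpr hne
  -- fields
  obtain ⟨K, _, _, _, hrankK, hcardK⟩ := exists_finext F (d := ℓ) (by omega)
  obtain ⟨L, _, _, _, hrankL, hcardL⟩ := exists_finext F (d := m - ℓ) hd2
  haveI : FiniteDimensional F K := FiniteDimensional.of_finrank_pos (by omega)
  haveI : FiniteDimensional F L := FiniteDimensional.of_finrank_pos (by omega)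
  -- units of prime order
  haveI := Fact.mk hr
  haveI := Fact.mk hs
  obtain ⟨a, ha⟩ := exists_prime_orderOf_dvd_card (G := Kˣ) r
    (by rw [Fintype.card_units, hcardK, hF]; exact hrdvd)
  obtain ⟨b, hb⟩ := exists_prime_orderOf_dvd_card (G := Lˣ) s
    (by rw [Fintype.card_units, hcardL, hF]; exact hsdvd)
  -- the product algebra
  have hrankA : Module.finrank F (K × L) = m := by
    rw [Module.finrank_prod, hrankK, hrankL]; omega
  let bA : Module.Basis (Fin m) F (K × L) := Module.finBasisOfFinrankEq F (K × L) hrankA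
  let φ : (K × L) →ₐ[F] Matrix (Fin m) (Fin m) F :=
    (algEquivMatrix bA).toAlgHom.comp (Algebra.lmul F (K × L))
  have hφ : Function.Injective φ := by
    intro x y h
    exact Algebra.lmul_injective ((algEquivMatrix bA).injective (by simpa [φ] using h))
  let u : (K × L)ˣ := (MulEquiv.prodUnits (M := K) (N := L)).symm (a, b)
  have hu : orderOf u = r * s := by
    rw [MulEquiv.orderOf_eq, Prod.orderOf_mk, ha, hb, Nat.Coprime.lcm_eq_mul hcop]
  set N : Matrix (Fin m) (Fin m) F := φ ↑u with hN
  set B : Matrix (Fin m) (Fin m) F := φ ↑u⁻¹ with hB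
  have hφinj : Function.Injective ⇑φ.toRingHom.toMonoidHom := hφ
  have hordN : orderOf N = r * s := by
    have h1 : orderOf (φ.toRingHom.toMonoidHom (↑u : K × L)) = orderOf (↑u : K × L) :=
      orderOf_injective φ.toRingHom.toMonoidHom hφinj _
    rw [hN]
    exact h1.trans (orderOf_units.trans hu)
  have hNB : N * B = 1 := by rw [hN, hB, ← _root_.map_mul, Units.mul_inv, _root_.map_one]
  have hBN : B * N = 1 := by rw [hN, hB, ← _root_.map_mul, Units.inv_mul, _root_.map_one]
  let M : Matrix (Fin m ⊕ Fin m) (Fin m ⊕ Fin m) F := Matrix.fromBlocks N 0 0 Bᵀ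
  have hmem : M ∈ Matrix.symplecticGroup (Fin m) F := by
    rw [SymplecticGroup.mem_iff, Matrix.J]
    rw [show M = Matrix.fromBlocks N 0 0 Bᵀ from rfl]
    rw [Matrix.fromBlocks_transpose, Matrix.fromBlocks_multiply, Matrix.fromBlocks_multiply]
    have h1 : N * (Bᵀ)ᵀ = 1 := by rw [Matrix.transpose_transpose]; exact hNB
    have h2 : Bᵀ * Nᵀ = 1 := by rw [← Matrix.transpose_mul, hNB, Matrix.transpose_one]
    simp [h1, h2, hNB, hBN, Matrix.mul_neg]
  have hpow : ∀ k : ℕ, M ^ k = 1 ↔ N ^ k = 1 := by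
    intro k
    rw [show M = Matrix.fromBlocks N 0 0 Bᵀ from rfl, fromBlocks_pow]
    constructor
    · intro h
      have hto : Matrix.toBlocks₁₁ (1 : Matrix (Fin m ⊕ Fin m) (Fin m ⊕ Fin m) F) =
          (1 : Matrix (Fin m) (Fin m) F) := by
        rw [← Matrix.fromBlocks_one, Matrix.toBlocks_fromBlocks₁₁]
      have h2 := congrArg Matrix.toBlocks₁₁ h
      rw [Matrix.toBlocks_fromBlocks₁₁, hto] at h2
      exact h2
    · intro h
      have huk : u ^ k = 1 := by
        apply Units.ext
        apply hφ
        rw [Units.val_pow_eq_pow_val, Units.val_one, _root_.map_one, _root_.map_pow]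
        exact h
      have h2 : (Bᵀ) ^ k = 1 := by
        rw [← Matrix.transpose_pow, hB, ← _root_.map_pow, ← Units.val_pow_eq_pow_val, inv_pow, huk,
          inv_one, Units.val_one, _root_.map_one, Matrix.transpose_one]
      rw [h, h2, ← Matrix.fromBlocks_one]
  have hordM : orderOf M = r * s := by
    have h := orderOf_eq_orderOf_iff.mpr hpow
    rw [h, hordN]
  refine ⟨⟨M, hmem⟩, ?_⟩
  rw [← hordM]
  exact (orderOf_submonoid (⟨M, hmem⟩ : Matrix.symplecticGroup (Fin m) F)).symm
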